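/- Let G be a graph with maximum degree Δ. Then for each m ≥ 1 and each vertex v of G, the number of subtrees of G with exactly m vertices containing v is at most (eΔ)^(m-1). -/

import Mathlib

set_option linter.unusedSectionVars false
set_option maxHeartbeats 1000000

open SimpleGraph

section TreeHelpers
variable {α : Type*} {Γ : SimpleGraph α}

noncomputable def thePath (ht : Γ.IsTree) (r u : α) : Γ.Walk u r :=
  (ht.existsUnique_path u r).choose

lemma thePath_isPath (ht : Γ.IsTree) (r u : α) : (thePath ht r u).IsPath :=
  (ht.existsUnique_path u r).choose_spec.1

lemma thePath_unique (ht : Γ.IsTree) {r u : α} (w : Γ.Walk u r) (hw : w.IsPath) :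
    w = thePath ht r u :=
  (ht.existsUnique_path u r).choose_spec.2 w hw

noncomputable def par (ht : Γ.IsTree) (r u : α) : α := (thePath ht r u).getVert 1

lemma thePath_root (ht : Γ.IsTree) (r : α) : thePath ht r r = Walk.nil :=
  (thePath_unique ht Walk.nil (Walk.IsPath.nil)).symm

lemma par_root (ht : Γ.IsTree) (r : α) : par ht r r = r := by
  unfold par; rw [thePath_root]; rfl

lemma exists_cons (ht : Γ.IsTree) {r u : α} (hu : u ≠ r) :
    ∃ (x : α) (h : Γ.Adj u x) (w : Γ.Walk x r), thePath ht r u = Walk.cons h w := by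
  have hnil : ¬ (thePath ht r u).Nil := by
    intro h
    exact hu (Walk.eq_of_length_eq_zero (Walk.nil_iff_length_eq.1 h))
  exact Walk.not_nil_iff.1 hnil

lemma par_spec (ht : Γ.IsTree) {r u : α} (hu : u ≠ r) :
    Γ.Adj u (par ht r u) ∧
      (thePath ht r (par ht r u)).length + 1 = (thePath ht r u).length ∧
      par ht r u ∈ (thePath ht r u).support ∧ (thePath ht r u).support.tail =
        (thePath ht r (par ht r u)).support := by
  obtain ⟨x, h, w, hw⟩ := exists_cons ht hu
  have hpx : par ht r u = x := by
    unfold par; rw [hw, Walk.getVert_cons _ _ one_ne_zero]; exact Walk.getVert_zero w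
  have hwpath : w.IsPath := by
    have := thePath_isPath ht r u
    rw [hw, Walk.cons_isPath_iff] at this
    exact this.1
  have hwx : w = thePath ht r x := thePath_unique ht w hwpath
  subst hpx
  refine ⟨h, ?_, ?_, ?_⟩
  · rw [hw, Walk.length_cons, hwx]
  · rw [hw, Walk.support_cons]
    exact List.mem_cons_of_mem _ w.start_mem_support
  · rw [hw, Walk.support_cons, List.tail_cons, hwx]

lemma eq_par_or [DecidableEq α] (ht : Γ.IsTree) (r : α) {a b : α} (h : Γ.Adj a b) :
    a = par ht r b ∨ b = par ht r a := by
  by_cases hb : b ∈ (thePath ht r a).support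
  · -- then thePath b is the dropUntil, and a ∉ its support, so par a = b
    right
    have hdrop : (thePath ht r a).dropUntil b hb = thePath ht r b :=
      thePath_unique ht _ ((thePath_isPath ht r a).dropUntil hb)
    have hna : a ∉ (thePath ht r b).support := by
      rw [← hdrop]
      intro ha
      have hspec := Walk.take_spec (thePath ht r a) hb
      have hnodup := (thePath_isPath ht r a).support_nodup
      rw [← hspec, Walk.support_append] at hnodup
      have hdis := (List.nodup_append.mp hnodup).2.2
      have ha1 : a ∈ ((thePath ht r a).takeUntil b hb).support :=
        Walk.start_mem_support _
      have ha2 : a ∈ ((thePath ht r a).dropUntil b hb).support.tail := by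
        have hsup := Walk.support_eq_cons ((thePath ht r a).dropUntil b hb)
        rw [hsup] at ha
        rcases List.mem_cons.mp ha with h1 | h1
        · exact absurd h1 h.ne
        · rw [hsup]; exact h1
      exact hdis a ha1 a ha2 rfl
    have : (Walk.cons h (thePath ht r b)).IsPath :=
      (Walk.cons_isPath_iff h _).mpr ⟨thePath_isPath ht r b, hna⟩
    have hu := thePath_unique ht _ this
    have : par ht r a = (Walk.cons h (thePath ht r b)).getVert 1 := by
      unfold par; rw [hu]
    rw [this, Walk.getVert_cons _ _ one_ne_zero]
    norm_num [Walk.getVert_zero]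
  · left
    have : (Walk.cons h.symm (thePath ht r a)).IsPath :=
      (Walk.cons_isPath_iff h.symm _).mpr ⟨thePath_isPath ht r a, hb⟩
    have hu := thePath_unique ht _ this
    have : par ht r b = (Walk.cons h.symm (thePath ht r a)).getVert 1 := by
      unfold par; rw [hu]
    rw [this, Walk.getVert_cons _ _ one_ne_zero]
    norm_num [Walk.getVert_zero]

lemma adj_iff_par [DecidableEq α] (ht : Γ.IsTree) (r : α) {a b : α} :
    Γ.Adj a b ↔ (a ≠ r ∧ b = par ht r a) ∨ (b ≠ r ∧ a = par ht r b) := by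
  constructor
  · intro h
    rcases eq_par_or ht r h with h1 | h1
    · refine Or.inr ⟨fun hbr => ?_, h1⟩
      subst hbr; rw [par_root] at h1; subst h1; exact h.ne rfl
    · refine Or.inl ⟨fun har => ?_, h1⟩
      subst har; rw [par_root] at h1; subst h1; exact h.ne rfl
  · rintro (⟨ha, rfl⟩ | ⟨hb, rfl⟩)
    · exact (par_spec ht ha).1
    · exact ((par_spec ht hb).1).symm

end TreeHelpers

lemma succ_pow_le_exp_pow_mul_factorial (n : ℕ) :
    ((n : ℝ)+1)^n ≤ Real.exp 1 ^ n * n.factorial := by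
  induction n with
  | zero => simp
  | succ k ih =>
    have hk1 : (0:ℝ) < (k:ℝ)+1 := by positivity
    have hexp := Real.add_one_le_exp (1/((k:ℝ)+1))
    have h1 : ((k:ℝ)+1+1) ≤ ((k:ℝ)+1) * Real.exp (1/((k:ℝ)+1)) := by
      have : ((k:ℝ)+1+1) = ((k:ℝ)+1) * (1/((k:ℝ)+1) + 1) := by field_simp; ring
      rw [this]
      exact mul_le_mul_of_nonneg_left hexp (le_of_lt hk1)
    have h2 : Real.exp (1/((k:ℝ)+1)) ^ (k+1) = Real.exp 1 := by
      rw [← Real.exp_nat_mul]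
      congr 1
      field_simp
      norm_num
    push_cast
    calc ((k:ℝ)+1+1)^(k+1)
        ≤ (((k:ℝ)+1) * Real.exp (1/((k:ℝ)+1)))^(k+1) :=
          pow_le_pow_left₀ (by positivity) h1 _
      _ = ((k:ℝ)+1)^(k+1) * Real.exp 1 := by rw [mul_pow, h2]
      _ = (((k:ℝ)+1)^k * ((k:ℝ)+1)) * Real.exp 1 := by ring
      _ ≤ ((Real.exp 1 ^ k * k.factorial) * ((k:ℝ)+1)) * Real.exp 1 := by
          have := mul_le_mul_of_nonneg_right ih (le_of_lt hk1)
          nlinarith [Real.exp_pos 1, this]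
      _ = Real.exp 1 ^ (k+1) * ((k+1) * k.factorial) := by ring
      _ = Real.exp 1 ^ (k+1) * (k+1).factorial := by
          rw [Nat.factorial_succ]; push_cast; ring

section Main
variable {V : Type*} [Fintype V] [DecidableEq V]

structure LabTree (G : SimpleGraph V) (v : V) (n : ℕ) where
  H : G.Subgraph
  hv : v ∈ H.verts
  tree : H.coe.IsTree
  lab : Fin n ≃ ↥(H.verts \ {v})

namespace LabTree
variable {G : SimpleGraph V} {v : V} {n : ℕ}

noncomputable def root (x : LabTree G v n) : ↥x.H.verts := ⟨v, x.hv⟩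

noncomputable def pr (x : LabTree G v n) : ↥x.H.verts → ↥x.H.verts := par x.tree x.root

def inc (x : LabTree G v n) (d : ↥(x.H.verts \ {v})) : ↥x.H.verts := ⟨d.1, d.2.1⟩

noncomputable def idx (x : LabTree G v n) (u : ↥x.H.verts) : Fin (n+1) :=
  if h : (u : V) = v then 0 else (x.lab.symm ⟨u.1, u.2, h⟩).succ

lemma inc_ne_root (x : LabTree G v n) (d : ↥(x.H.verts \ {v})) : x.inc d ≠ x.root := by
  intro h
  exact d.2.2 (congrArg Subtype.val h)

lemma idx_inc (x : LabTree G v n) (d : ↥(x.H.verts \ {v})) :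
    x.idx (x.inc d) = (x.lab.symm d).succ := by
  have hne : ((x.inc d : V)) ≠ v := d.2.2
  rw [idx, dif_neg hne]
  congr

lemma adj_pr (x : LabTree G v n) (d : ↥(x.H.verts \ {v})) :
    G.Adj (x.pr (x.inc d)).1 (x.inc d).1 :=
  x.H.adj_sub ((par_spec x.tree (x.inc_ne_root d)).1.symm)

noncomputable def encode (σ : {q : V × V // G.Adj q.1 q.2} → Fin Δ) (x : LabTree G v n) :
    Fin n → Fin (n+1) × Fin Δ := fun i =>
  (x.idx (x.pr (x.inc (x.lab i))),
    σ ⟨((x.pr (x.inc (x.lab i))).1, (x.lab i).1), x.adj_pr (x.lab i)⟩)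

end LabTree
end Main

set_option linter.unusedSectionVars false


section Inj
variable {V : Type*} [Fintype V] [DecidableEq V] {G : SimpleGraph V} {v : V} {n : ℕ}
  {Δ : ℕ}

namespace LabTree

lemma adj_char (x : LabTree G v n) (a b : V) : x.H.Adj a b ↔
    ∃ (ha : a ∈ x.H.verts) (hb : b ∈ x.H.verts),
      ((a ≠ v ∧ b = (x.pr ⟨a, ha⟩).1) ∨ (b ≠ v ∧ a = (x.pr ⟨b, hb⟩).1)) := by
  constructor
  · intro h
    have ha := x.H.edge_vert h
    have hb := x.H.edge_vert h.symm
    refine ⟨ha, hb, ?_⟩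
    have hc : x.H.coe.Adj ⟨a, ha⟩ ⟨b, hb⟩ := h
    rw [adj_iff_par x.tree x.root] at hc
    rcases hc with ⟨h1, h2⟩ | ⟨h1, h2⟩
    · left
      exact ⟨fun hav => h1 (Subtype.ext hav), congrArg Subtype.val h2⟩
    · right
      exact ⟨fun hbv => h1 (Subtype.ext hbv), congrArg Subtype.val h2⟩
  · rintro ⟨ha, hb, (⟨h1, h2⟩ | ⟨h1, h2⟩)⟩
    · have hc : x.H.coe.Adj ⟨a, ha⟩ ⟨b, hb⟩ := by
        rw [adj_iff_par x.tree x.root]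
        exact Or.inl ⟨fun h => h1 (congrArg Subtype.val h), Subtype.ext h2⟩
      exact hc
    · have hc : x.H.coe.Adj ⟨a, ha⟩ ⟨b, hb⟩ := by
        rw [adj_iff_par x.tree x.root]
        exact Or.inr ⟨fun h => h1 (congrArg Subtype.val h), Subtype.ext h2⟩
      exact hc

lemma encode_injective (σ : {q : V × V // G.Adj q.1 q.2} → Fin Δ)
    (hσ : ∀ q q' : {q : V × V // G.Adj q.1 q.2}, q.1.1 = q'.1.1 → σ q = σ q' →
      q.1.2 = q'.1.2) :
    Function.Injective (fun x : LabTree G v n => encode σ x) := by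
  intro x y hf
  replace hf : ∀ i, encode σ x i = encode σ y i := fun i => congrFun hf i
  have key : ∀ (N : ℕ) (u : ↥x.H.verts) (u' : ↥y.H.verts),
      (thePath x.tree x.root u).length ≤ N → x.idx u = y.idx u' → (u : V) = u' := by
    intro N
    induction N with
    | zero =>
      intro u u' hlen hidx
      have hu : (u : V) = v :=
        congrArg Subtype.val (Walk.eq_of_length_eq_zero (Nat.le_zero.mp hlen))
      have hu0 : x.idx u = 0 := by rw [idx, dif_pos hu]
      rw [hu0] at hidx
      by_cases hu' : (u' : V) = v
      · rw [hu, hu']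
      · rw [idx, dif_neg hu'] at hidx
        exact absurd hidx.symm (Fin.succ_ne_zero _)
    | succ N ih =>
      intro u u' hlen hidx
      by_cases hu : (u : V) = v
      · have hu0 : x.idx u = 0 := by rw [idx, dif_pos hu]
        rw [hu0] at hidx
        by_cases hu' : (u' : V) = v
        · rw [hu, hu']
        · rw [idx, dif_neg hu'] at hidx
          exact absurd hidx.symm (Fin.succ_ne_zero _)
      · have hu' : (u' : V) ≠ v := by
          intro h
          rw [idx, dif_neg hu, idx, dif_pos h] at hidx
          exact Fin.succ_ne_zero _ hidx
        rw [idx, dif_neg hu, idx, dif_neg hu'] at hidx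
        have hii : x.lab.symm ⟨u.1, u.2, hu⟩ = y.lab.symm ⟨u'.1, u'.2, hu'⟩ :=
          Fin.succ_injective _ hidx
        set i := x.lab.symm ⟨u.1, u.2, hu⟩ with hi
        have hxl : x.inc (x.lab i) = u := by
          apply Subtype.ext
          show ((x.lab i : ↥(x.H.verts \ {v})) : V) = u.1
          rw [hi, Equiv.apply_symm_apply]
        have hyl : y.inc (y.lab i) = u' := by
          apply Subtype.ext
          show ((y.lab i : ↥(y.H.verts \ {v})) : V) = u'.1
          rw [hii, Equiv.apply_symm_apply]
        have h1 : x.idx (x.pr (x.inc (x.lab i))) = y.idx (y.pr (y.inc (y.lab i))) :=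
          congrArg Prod.fst (hf i)
        have h2 := congrArg Prod.snd (hf i)
        have hne := x.inc_ne_root (x.lab i)
        have hlen2 : (thePath x.tree x.root (x.pr (x.inc (x.lab i)))).length ≤ N := by
          have h3 := (par_spec x.tree hne).2.1
          have h4 : (thePath x.tree x.root (x.inc (x.lab i))).length ≤ N + 1 := by
            rw [hxl]; exact hlen
          show (thePath x.tree x.root (par x.tree x.root (x.inc (x.lab i)))).length ≤ N
          omega
        have hp : (x.pr (x.inc (x.lab i))).1 = (y.pr (y.inc (y.lab i))).1 :=
          ih _ _ hlen2 h1
        have h5 : (x.lab i).1 = (y.lab i).1 :=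
          hσ ⟨((x.pr (x.inc (x.lab i))).1, (x.lab i).1), x.adj_pr (x.lab i)⟩
            ⟨((y.pr (y.inc (y.lab i))).1, (y.lab i).1), y.adj_pr (y.lab i)⟩ hp h2
        have h6 : (u : V) = (x.lab i).1 := (congrArg Subtype.val hxl).symm
        have h7 : ((y.lab i).1 : V) = u' := congrArg Subtype.val hyl
        rw [h6, h5, h7]
  have hcoe : ∀ i : Fin n, ((x.lab i : ↥(x.H.verts \ {v})) : V) = (y.lab i : ↥(y.H.verts \ {v})) := by
    intro i
    have h1 : x.idx (x.inc (x.lab i)) = y.idx (y.inc (y.lab i)) := by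
      rw [idx_inc, idx_inc, Equiv.symm_apply_apply, Equiv.symm_apply_apply]
    exact key _ _ _ le_rfl h1
  have hpar : ∀ i : Fin n, (x.pr (x.inc (x.lab i))).1 = (y.pr (y.inc (y.lab i))).1 := by
    intro i
    have h1 : x.idx (x.pr (x.inc (x.lab i))) = y.idx (y.pr (y.inc (y.lab i))) :=
      congrArg Prod.fst (hf i)
    exact key _ _ _ le_rfl h1
  have hsub : x.H.verts \ {v} = y.H.verts \ {v} := by
    ext a
    constructor
    · intro ha
      have h1 := hcoe (x.lab.symm ⟨a, ha⟩)
      rw [Equiv.apply_symm_apply] at h1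
      rw [show a = ((y.lab (x.lab.symm ⟨a, ha⟩) : ↥(y.H.verts \ {v})) : V) from h1]
      exact (y.lab _).2
    · intro ha
      have h1 := hcoe (y.lab.symm ⟨a, ha⟩)
      rw [Equiv.apply_symm_apply] at h1
      rw [show a = ((x.lab (y.lab.symm ⟨a, ha⟩) : ↥(x.H.verts \ {v})) : V) from h1.symm]
      exact (x.lab _).2
  have hverts : x.H.verts = y.H.verts := by
    ext a
    by_cases hav : a = v
    · subst hav; simp [x.hv, y.hv]
    · constructor
      · intro h
        have : a ∈ y.H.verts \ {v} := hsub ▸ (⟨h, hav⟩ : a ∈ x.H.verts \ {v})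
        exact this.1
      · intro h
        have : a ∈ x.H.verts \ {v} := hsub ▸ (⟨h, hav⟩ : a ∈ y.H.verts \ {v})
        exact this.1
  have hparV : ∀ (a : V) (ha : a ∈ x.H.verts) (ha' : a ∈ y.H.verts) (hav : a ≠ v),
      (x.pr ⟨a, ha⟩).1 = (y.pr ⟨a, ha'⟩).1 := by
    intro a ha ha' hav
    set i := x.lab.symm ⟨a, ha, hav⟩ with hi
    have h1 : x.inc (x.lab i) = ⟨a, ha⟩ := by
      apply Subtype.ext
      show ((x.lab i : ↥(x.H.verts \ {v})) : V) = a
      rw [hi, Equiv.apply_symm_apply]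
    have h2 : y.inc (y.lab i) = ⟨a, ha'⟩ := by
      apply Subtype.ext
      show ((y.lab i : ↥(y.H.verts \ {v})) : V) = a
      rw [← hcoe i, hi, Equiv.apply_symm_apply]
    have h3 := hpar i
    rw [h1, h2] at h3
    exact h3
  have hH : x.H = y.H := by
    apply SimpleGraph.Subgraph.ext hverts
    funext a b
    apply propext
    rw [adj_char x, adj_char y]
    constructor
    · rintro ⟨ha, hb, (⟨h1, h2⟩ | ⟨h1, h2⟩)⟩
      · exact ⟨hverts ▸ ha, hverts ▸ hb,
          Or.inl ⟨h1, h2.trans (hparV a ha (hverts ▸ ha) h1)⟩⟩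
      · exact ⟨hverts ▸ ha, hverts ▸ hb,
          Or.inr ⟨h1, h2.trans (hparV b hb (hverts ▸ hb) h1)⟩⟩
    · rintro ⟨ha, hb, (⟨h1, h2⟩ | ⟨h1, h2⟩)⟩
      · exact ⟨hverts ▸ ha, hverts ▸ hb,
          Or.inl ⟨h1, h2.trans (hparV a (hverts ▸ ha) ha h1).symm⟩⟩
      · exact ⟨hverts ▸ ha, hverts ▸ hb,
          Or.inr ⟨h1, h2.trans (hparV b (hverts ▸ hb) hb h1).symm⟩⟩
  rcases x with ⟨H1, hv1, t1, l1⟩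
  rcases y with ⟨H2, hv2, t2, l2⟩
  dsimp at hH hcoe
  subst hH
  have : l1 = l2 := Equiv.ext fun i => Subtype.ext (hcoe i)
  subst this
  rfl

end LabTree
end Inj


theorem trees_containing_vertex_bound {V : Type*} [Fintype V]
    (G : SimpleGraph V) [DecidableRel G.Adj] (Δ : ℕ) (hΔ : ∀ w : V, G.degree w ≤ Δ)
    (m : ℕ) (hm : 1 ≤ m) (v : V) :
    (Set.ncard {H : G.Subgraph | v ∈ H.verts ∧ H.verts.ncard = m ∧ H.coe.IsTree} : ℝ) ≤
      (Real.exp 1 * Δ) ^ (m - 1) := by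
  classical
  obtain ⟨n, rfl⟩ : ∃ n, m = n + 1 := ⟨m - 1, (Nat.succ_pred_eq_of_pos hm).symm⟩
  set T := {H : G.Subgraph | v ∈ H.verts ∧ H.verts.ncard = n + 1 ∧ H.coe.IsTree} with hT
  have hfinSub : Finite G.Subgraph :=
    Finite.of_injective (fun H => (H.verts, H.Adj))
      (fun H H' h => SimpleGraph.Subgraph.ext (congrArg Prod.fst h) (congrArg Prod.snd h))
  haveI : Fintype ↥T := Fintype.ofFinite _
  have hemb : ∀ p : V, Nonempty (↥(G.neighborSet p) ↪ Fin Δ) := by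
    intro p
    apply Function.Embedding.nonempty_of_card_le
    rw [Fintype.card_fin, G.card_neighborSet_eq_degree]
    exact hΔ p
  let σ : {q : V × V // G.Adj q.1 q.2} → Fin Δ := fun q => (hemb q.1.1).some ⟨q.1.2, q.2⟩
  have hσ : ∀ q q' : {q : V × V // G.Adj q.1 q.2}, q.1.1 = q'.1.1 → σ q = σ q' →
      q.1.2 = q'.1.2 := by
    rintro ⟨⟨p, a⟩, ha⟩ ⟨⟨p', b⟩, hb⟩ h1 h2
    dsimp at h1
    subst h1
    dsimp [σ] at h2
    have := (hemb p).some.injective h2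
    exact congrArg Subtype.val this
  let Φ : (Σ x : ↥T, (Fin n ≃ ↥(x.1.verts \ {v}))) → LabTree G v n :=
    fun p => ⟨p.1.1, p.1.2.1, p.1.2.2.2, p.2⟩
  have hΦinj : Function.Injective Φ := by
    rintro ⟨⟨H1, hx1⟩, l1⟩ ⟨⟨H2, hx2⟩, l2⟩ h
    dsimp [Φ] at h
    have hH : H1 = H2 := congrArg LabTree.H h
    subst hH
    have hl : l1 = l2 := eq_of_heq ((LabTree.mk.injEq _ _ _ _ _ _ _ _).mp h).2
    subst hl
    rfl
  have hcard : Fintype.card (Σ x : ↥T, (Fin n ≃ ↥(x.1.verts \ {v}))) ≤ ((n+1) * Δ)^n := by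
    calc Fintype.card (Σ x : ↥T, (Fin n ≃ ↥(x.1.verts \ {v})))
        ≤ Fintype.card (Fin n → Fin (n+1) × Fin Δ) :=
          Fintype.card_le_of_injective _ ((LabTree.encode_injective σ hσ).comp hΦinj)
      _ = ((n+1) * Δ)^n := by
          rw [Fintype.card_fun, Fintype.card_prod, Fintype.card_fin, Fintype.card_fin,
            Fintype.card_fin]
  have hDx : ∀ x : ↥T, Fintype.card ↥(x.1.verts \ {v}) = n := by
    intro x
    have h1 : (x.1.verts \ {v}).ncard = n := by
      have := Set.ncard_diff_singleton_of_mem x.2.1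
      rw [x.2.2.1] at this
      simpa using this
    rw [← Nat.card_eq_fintype_card, Nat.card_coe_set_eq, h1]
  have hsum : Fintype.card (Σ x : ↥T, (Fin n ≃ ↥(x.1.verts \ {v}))) = T.ncard * n.factorial := by
    rw [Fintype.card_sigma]
    have heach : ∀ x : ↥T, Fintype.card (Fin n ≃ ↥(x.1.verts \ {v})) = n.factorial := by
      intro x
      rw [Fintype.card_equiv ((Fintype.equivFinOfCardEq (hDx x)).symm)]
      simp
    rw [Finset.sum_congr rfl (fun x _ => heach x), Finset.sum_const, smul_eq_mul]
    congr 1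
    rw [Finset.card_univ, ← Nat.card_eq_fintype_card, Nat.card_coe_set_eq]
  have hnat : T.ncard * n.factorial ≤ ((n+1) * Δ)^n := hsum ▸ hcard
  have hfp : (0:ℝ) < (n.factorial : ℝ) := by
    exact_mod_cast n.factorial_pos
  have hgoalexp : n + 1 - 1 = n := rfl
  rw [hgoalexp]
  rw [← mul_le_mul_iff_left₀ hfp]
  calc (T.ncard : ℝ) * n.factorial ≤ (((n:ℝ)+1) * Δ)^n := by exact_mod_cast hnat
    _ ≤ (Real.exp 1 * Δ)^n * n.factorial := by
        rw [mul_pow, mul_pow]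
        calc ((n:ℝ)+1)^n * (Δ:ℝ)^n ≤ (Real.exp 1 ^ n * n.factorial) * (Δ:ℝ)^n :=
            mul_le_mul_of_nonneg_right (succ_pow_le_exp_pow_mul_factorial n) (by positivity)
          _ = Real.exp 1 ^ n * (Δ:ℝ)^n * n.factorial := by ring
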